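/- Let F be a complete set of k-MOFS(n;n/m), i.e. k = (n-1)^2/(m-1), and let F' be the d-dilation of F. If d^2 is not divisible by m, then F' is a maximal set of MOFS of type (dn;dn/m). -/

import Mathlib

def IsFreqSquare {n m : ℕ} (lam : ℕ) (F : Fin n → Fin n → Fin m) : Prop :=
  (∀ i : Fin n, ∀ s : Fin m, (Finset.univ.filter fun j => F i j = s).card = lam) ∧
  (∀ j : Fin n, ∀ s : Fin m, (Finset.univ.filter fun i => F i j = s).card = lam)

def AreOrth {n m : ℕ} (lam : ℕ) (F G : Fin n → Fin n → Fin m) : Prop :=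
  ∀ a b : Fin m,
    (Finset.univ.filter fun p : Fin n × Fin n => F p.1 p.2 = a ∧ G p.1 p.2 = b).card = lam ^ 2

def IsMaxFamily {n m k : ℕ} (lam : ℕ) (F : Fin k → Fin n → Fin n → Fin m) : Prop :=
  ¬ ∃ G : Fin n → Fin n → Fin m, IsFreqSquare lam G ∧ ∀ t, AreOrth lam (F t) G

def dilate {n m : ℕ} (d : ℕ) (hd : 0 < d) (F : Fin n → Fin n → Fin m) :
    Fin (d * n) → Fin (d * n) → Fin m :=
  fun i j =>
    F ⟨i.1 / d, (Nat.div_lt_iff_lt_mul hd).2 (Nat.lt_of_lt_of_eq i.2 (Nat.mul_comm d n))⟩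
      ⟨j.1 / d, (Nat.div_lt_iff_lt_mul hd).2 (Nat.lt_of_lt_of_eq j.2 (Nat.mul_comm d n))⟩

/-- The "kernel" vector at cell `p`: the image of the standard basis vector `e_p`
under the sum of orthogonal projections onto the constraint subspaces. -/
def Zfun (n m k : ℕ) (F : Fin k → Fin n → Fin n → Fin m) (p : Fin n × Fin n)
    (q : Fin n × Fin n) : ℚ :=
  (if q.1 = p.1 then 1 else 0) / n + (if q.2 = p.2 then 1 else 0) / n
    + (∑ t, if F t q.1 q.2 = F t p.1 p.2 then (1 : ℚ) else 0) / (n * ((n / m : ℕ) : ℚ))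
    - (k + 1) / (n : ℚ) ^ 2

lemma sumE (n m k : ℕ) (F : Fin k → Fin n → Fin n → Fin m) (p : Fin n × Fin n)
    (W : Fin n × Fin n → ℚ) :
    ∑ q, W q * Zfun n m k F p q =
      (∑ j, W (p.1, j)) / n + (∑ i, W (i, p.2)) / n
        + (∑ t, ∑ q : Fin n × Fin n, if F t q.1 q.2 = F t p.1 p.2 then W q else 0)
            / ((n : ℚ) * ((n / m : ℕ) : ℚ))
        - (k + 1) * (∑ q, W q) / (n : ℚ) ^ 2 := by
  have t1 : ∑ q : Fin n × Fin n, (if q.1 = p.1 then W q else 0) = ∑ j, W (p.1, j) := by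
    rw [Fintype.sum_prod_type, Finset.sum_eq_single p.1]
    · simp
    · intro i _ hi; simp [hi]
    · simp
  have t2 : ∑ q : Fin n × Fin n, (if q.2 = p.2 then W q else 0) = ∑ i, W (i, p.2) := by
    rw [Fintype.sum_prod_type_right, Finset.sum_eq_single p.2]
    · simp
    · intro j _ hj; simp [hj]
    · simp
  have step : ∀ q : Fin n × Fin n, W q * Zfun n m k F p q =
      (if q.1 = p.1 then W q else 0) / n + (if q.2 = p.2 then W q else 0) / n
        + (∑ t, if F t q.1 q.2 = F t p.1 p.2 then W q else 0) / ((n : ℚ) * ((n / m : ℕ) : ℚ))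
        - (k + 1) * W q / (n : ℚ) ^ 2 := by
    intro q
    simp only [Zfun, Finset.mul_sum, mul_ite, mul_one, mul_zero, mul_add, mul_sub,
      ← mul_div_assoc]
    ring_nf
  rw [Finset.sum_congr rfl (fun q _ => step q)]
  rw [Finset.sum_sub_distrib, Finset.sum_add_distrib, Finset.sum_add_distrib,
    ← Finset.sum_div, ← Finset.sum_div, ← Finset.sum_div, t1, t2, Finset.sum_comm,
    ← Finset.sum_div, ← Finset.mul_sum]

lemma rowcountQ {n m L : ℕ} {F : Fin n → Fin n → Fin m}
    (h : ∀ i s, (Finset.univ.filter fun j => F i j = s).card = L) (i : Fin n) (a : Fin m) :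
    ∑ j, (if F i j = a then (1 : ℚ) else 0) = L := by
  rw [Finset.sum_boole, h]

lemma colcountQ {n m L : ℕ} {F : Fin n → Fin n → Fin m}
    (h : ∀ j s, (Finset.univ.filter fun i => F i j = s).card = L) (j : Fin n) (a : Fin m) :
    ∑ i, (if F i j = a then (1 : ℚ) else 0) = L := by
  rw [Finset.sum_boole, h]

lemma classcountQ {n m L : ℕ} {F : Fin n → Fin n → Fin m}
    (h : ∀ i s, (Finset.univ.filter fun j => F i j = s).card = L) (a : Fin m) :
    ∑ q : Fin n × Fin n, (if F q.1 q.2 = a then (1 : ℚ) else 0) = (n : ℚ) * L := by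
  rw [Fintype.sum_prod_type]
  rw [Finset.sum_congr rfl (fun i _ => rowcountQ h i a)]
  simp [mul_comm]

section core
variable (n m k : ℕ) (F : Fin k → Fin n → Fin n → Fin m) (p : Fin n × Fin n)

lemma Zrow (hn : 0 < n) (hm : 0 < m) (hmn : m ∣ n)
    (hF : ∀ t, IsFreqSquare (n / m) (F t)) (i : Fin n) :
    ∑ j, Zfun n m k F p (i, j) = if i = p.1 then 1 else 0 := by
  have hL : 0 < n / m := Nat.div_pos (Nat.le_of_dvd hn hmn) hm
  have hNq : (n : ℚ) ≠ 0 := Nat.cast_ne_zero.2 hn.ne'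
  have hLq : ((n / m : ℕ) : ℚ) ≠ 0 := Nat.cast_ne_zero.2 hL.ne'
  simp only [Zfun]
  rw [Finset.sum_sub_distrib, Finset.sum_add_distrib, Finset.sum_add_distrib,
    ← Finset.sum_div, ← Finset.sum_div, ← Finset.sum_div]
  rw [show (∑ j : Fin n, if (i, j).2 = p.2 then (1:ℚ) else 0) = 1 by
    simp [Finset.sum_ite_eq']]
  rw [Finset.sum_comm]
  rw [Finset.sum_congr rfl (fun t _ => rowcountQ (hF t).1 i (F t p.1 p.2))]
  simp only [Finset.sum_const, Finset.card_univ, Fintype.card_fin, nsmul_eq_mul]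
  by_cases hip : i = p.1 <;> simp only [hip, if_pos, if_neg, ite_true, ite_false] <;>
    · simp only [Finset.sum_const, Finset.card_univ, Fintype.card_fin, nsmul_eq_mul]
      field_simp
      ring

end core

section core2
variable (n m k : ℕ) (F : Fin k → Fin n → Fin n → Fin m) (p : Fin n × Fin n)

lemma Zcol (hn : 0 < n) (hm : 0 < m) (hmn : m ∣ n)
    (hF : ∀ t, IsFreqSquare (n / m) (F t)) (j : Fin n) :
    ∑ i, Zfun n m k F p (i, j) = if j = p.2 then 1 else 0 := by
  have hL : 0 < n / m := Nat.div_pos (Nat.le_of_dvd hn hmn) hm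
  have hNq : (n : ℚ) ≠ 0 := Nat.cast_ne_zero.2 hn.ne'
  have hLq : ((n / m : ℕ) : ℚ) ≠ 0 := Nat.cast_ne_zero.2 hL.ne'
  simp only [Zfun]
  rw [Finset.sum_sub_distrib, Finset.sum_add_distrib, Finset.sum_add_distrib,
    ← Finset.sum_div, ← Finset.sum_div, ← Finset.sum_div]
  rw [show (∑ i : Fin n, if (i, j).1 = p.1 then (1:ℚ) else 0) = 1 by
    simp [Finset.sum_ite_eq']]
  rw [Finset.sum_comm]
  rw [Finset.sum_congr rfl (fun t _ => colcountQ (hF t).2 j (F t p.1 p.2))]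
  by_cases hip : j = p.2 <;> simp only [hip, if_pos, if_neg, ite_true, ite_false] <;>
    · simp only [Finset.sum_const, Finset.card_univ, Fintype.card_fin, nsmul_eq_mul]
      field_simp
      ring

end core2

section core3
variable (n m k : ℕ) (F : Fin k → Fin n → Fin n → Fin m) (p : Fin n × Fin n)

lemma ZT (hn : 0 < n) (hm : 0 < m) (hmn : m ∣ n)
    (hF : ∀ t, IsFreqSquare (n / m) (F t))
    (horth : ∀ s t, s ≠ t → AreOrth (n / m) (F s) (F t))
    (u : Fin k) (b : Fin m) :
    ∑ q : Fin n × Fin n, (if F u q.1 q.2 = b then Zfun n m k F p q else 0) =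
      if F u p.1 p.2 = b then 1 else 0 := by
  have hL : 0 < n / m := Nat.div_pos (Nat.le_of_dvd hn hmn) hm
  have hNq : (n : ℚ) ≠ 0 := Nat.cast_ne_zero.2 hn.ne'
  have hLq : ((n / m : ℕ) : ℚ) ≠ 0 := Nat.cast_ne_zero.2 hL.ne'
  have hk : 1 ≤ k := u.pos
  set L : ℚ := ((n / m : ℕ) : ℚ) with hLdef
  have split : ∀ q : Fin n × Fin n, (if F u q.1 q.2 = b then Zfun n m k F p q else 0) =
      (if F u q.1 q.2 = b then (if q.1 = p.1 then (1:ℚ) else 0) else 0) / n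
      + (if F u q.1 q.2 = b then (if q.2 = p.2 then (1:ℚ) else 0) else 0) / n
      + (if F u q.1 q.2 = b then (∑ t, if F t q.1 q.2 = F t p.1 p.2 then (1:ℚ) else 0) else 0)
          / ((n : ℚ) * L)
      - (if F u q.1 q.2 = b then ((k:ℚ)+1)/(n:ℚ)^2 else 0) := by
    intro q
    by_cases hq : F u q.1 q.2 = b <;> simp [hq, Zfun, hLdef]
  rw [Finset.sum_congr rfl (fun q _ => split q)]
  rw [Finset.sum_sub_distrib, Finset.sum_add_distrib, Finset.sum_add_distrib,
    ← Finset.sum_div, ← Finset.sum_div, ← Finset.sum_div]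
  have S1 : ∑ q : Fin n × Fin n,
      (if F u q.1 q.2 = b then (if q.1 = p.1 then (1:ℚ) else 0) else 0) = L := by
    rw [Fintype.sum_prod_type, Finset.sum_eq_single p.1]
    · rw [hLdef, ← rowcountQ (hF u).1 p.1 b]
      exact Finset.sum_congr rfl fun j _ => by by_cases hq : F u p.1 j = b <;> simp [hq]
    · intro i _ hi
      exact Finset.sum_eq_zero fun j _ => by simp [hi]
    · simp
  have S2 : ∑ q : Fin n × Fin n,
      (if F u q.1 q.2 = b then (if q.2 = p.2 then (1:ℚ) else 0) else 0) = L := by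
    rw [Fintype.sum_prod_type_right, Finset.sum_eq_single p.2]
    · rw [hLdef, ← colcountQ (hF u).2 p.2 b]
      exact Finset.sum_congr rfl fun i _ => by by_cases hq : F u i p.2 = b <;> simp [hq]
    · intro j _ hj
      exact Finset.sum_eq_zero fun i _ => by simp [hj]
    · simp
  have Sclass : ∑ q : Fin n × Fin n, (if F u q.1 q.2 = b then (1:ℚ) else 0) = (n:ℚ) * L :=
    classcountQ (hF u).1 b
  have S3 : ∑ q : Fin n × Fin n,
      (if F u q.1 q.2 = b then (∑ t, if F t q.1 q.2 = F t p.1 p.2 then (1:ℚ) else 0) else 0)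
      = (if F u p.1 p.2 = b then (n:ℚ) * L else 0) + ((k:ℚ) - 1) * L^2 := by
    have swap : ∀ q : Fin n × Fin n,
        (if F u q.1 q.2 = b then (∑ t, if F t q.1 q.2 = F t p.1 p.2 then (1:ℚ) else 0) else 0)
        = ∑ t, (if F u q.1 q.2 = b then (if F t q.1 q.2 = F t p.1 p.2 then (1:ℚ) else 0) else 0) := by
      intro q; by_cases hq : F u q.1 q.2 = b <;> simp [hq]
    rw [Finset.sum_congr rfl (fun q _ => swap q), Finset.sum_comm]
    have gu : ∑ q : Fin n × Fin n,
        (if F u q.1 q.2 = b then (if F u q.1 q.2 = F u p.1 p.2 then (1:ℚ) else 0) else 0)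
        = if F u p.1 p.2 = b then (n:ℚ) * L else 0 := by
      by_cases h : F u p.1 p.2 = b
      · rw [if_pos h, ← Sclass]
        refine Finset.sum_congr rfl fun q _ => ?_
        by_cases hq : F u q.1 q.2 = b
        · simp [hq, h]
        · simp [hq]
      · rw [if_neg h]
        apply Finset.sum_eq_zero
        intro q _
        by_cases hq : F u q.1 q.2 = b
        · rw [if_pos hq, if_neg fun hqq => h (hqq.symm.trans hq)]
        · rw [if_neg hq]
    have gt : ∀ t, t ≠ u → ∑ q : Fin n × Fin n,
        (if F u q.1 q.2 = b then (if F t q.1 q.2 = F t p.1 p.2 then (1:ℚ) else 0) else 0)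
        = L^2 := by
      intro t ht
      have : ∀ q : Fin n × Fin n,
          (if F u q.1 q.2 = b then (if F t q.1 q.2 = F t p.1 p.2 then (1:ℚ) else 0) else 0)
          = (if F t q.1 q.2 = F t p.1 p.2 ∧ F u q.1 q.2 = b then (1:ℚ) else 0) := by
        intro q
        by_cases hq : F u q.1 q.2 = b <;> by_cases hq2 : F t q.1 q.2 = F t p.1 p.2 <;>
          simp [hq, hq2]
      rw [Finset.sum_congr rfl (fun q _ => this q), Finset.sum_boole,
        horth t u ht (F t p.1 p.2) b]
      push_cast
      ring
    rw [← Finset.add_sum_erase _ _ (Finset.mem_univ u), gu,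
      Finset.sum_congr rfl (fun t ht => gt t (Finset.ne_of_mem_erase ht)),
      Finset.sum_const, Finset.card_erase_of_mem (Finset.mem_univ u)]
    simp only [Finset.card_univ, Fintype.card_fin, nsmul_eq_mul]
    rw [Nat.cast_sub hk]
    push_cast
    ring
  have S4 : ∑ q : Fin n × Fin n, (if F u q.1 q.2 = b then ((k:ℚ)+1)/(n:ℚ)^2 else 0)
      = ((k:ℚ)+1)/(n:ℚ)^2 * ((n:ℚ) * L) := by
    rw [← Sclass, Finset.mul_sum]
    exact Finset.sum_congr rfl fun q _ => by by_cases hq : F u q.1 q.2 = b <;> simp [hq]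
  rw [S1, S2, S3, S4]
  by_cases h : F u p.1 p.2 = b <;> simp only [h, ite_true, ite_false, if_pos, if_neg] <;>
    · field_simp
      ring

end core3

lemma core (n m k : ℕ) (hn : 0 < n) (hm : 0 < m) (hmn : m ∣ n)
    (F : Fin k → Fin n → Fin n → Fin m)
    (hF : ∀ t, IsFreqSquare (n / m) (F t))
    (horth : ∀ s t, s ≠ t → AreOrth (n / m) (F s) (F t))
    (hcomplete : k * (m - 1) = (n - 1) ^ 2)
    (Y : Fin n × Fin n → ℚ)
    (hr : ∀ i, ∑ j, Y (i, j) = 0)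
    (hc : ∀ j, ∑ i, Y (i, j) = 0)
    (hT : ∀ t a, ∑ q : Fin n × Fin n, (if F t q.1 q.2 = a then Y q else 0) = 0)
    (p : Fin n × Fin n) : Y p = 0 := by
  have hL : 0 < n / m := Nat.div_pos (Nat.le_of_dvd hn hmn) hm
  have hNq : (n : ℚ) ≠ 0 := Nat.cast_ne_zero.2 hn.ne'
  have hLq : ((n / m : ℕ) : ℚ) ≠ 0 := Nat.cast_ne_zero.2 hL.ne'
  set L : ℚ := ((n / m : ℕ) : ℚ) with hLdef
  set Z : Fin n × Fin n → ℚ := Zfun n m k F p with hZdef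
  -- the inner product of Y with Z vanishes
  have hs : ∑ q : Fin n × Fin n, Y q = 0 := by
    rw [Fintype.sum_prod_type]; simp [hr]
  have hYZ : ∑ q, Y q * Z q = 0 := by
    rw [hZdef, sumE, hr, hc, hs]
    rw [Finset.sum_congr rfl (fun t _ => hT t (F t p.1 p.2))]
    simp
  -- Z equals the standard basis vector at p
  have hsZ : ∑ q : Fin n × Fin n, Z q = 1 := by
    rw [Fintype.sum_prod_type]
    rw [Finset.sum_congr rfl (fun i _ => Zrow n m k F p hn hm hmn hF i)]
    simp [Finset.sum_ite_eq']
  have hmLq : (n : ℚ) = (m : ℚ) * L := by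
    rw [hLdef, ← Nat.cast_mul, Nat.mul_div_cancel' hmn]
  have hcq : (k : ℚ) * ((m : ℚ) - 1) = ((n : ℚ) - 1) ^ 2 := by
    have h1 : ((k * (m-1) : ℕ) : ℚ) = (((n-1)^2 : ℕ) : ℚ) := by rw [hcomplete]
    push_cast [Nat.cast_sub (Nat.one_le_iff_ne_zero.2 hm.ne'),
      Nat.cast_sub (Nat.one_le_iff_ne_zero.2 hn.ne')] at h1
    exact h1
  have hgamma : 1/(n:ℚ) + 1/(n:ℚ) + (k:ℚ)/((n:ℚ)*L) - ((k:ℚ)+1)/(n:ℚ)^2 = 1 := by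
    field_simp
    ring_nf
    linear_combination L * hcq + (k:ℚ) * hmLq
  have hZp : Z p = 1 := by
    rw [hZdef]
    simp only [Zfun, if_pos rfl, ite_true]
    simpa using hgamma
  have hZZ : ∑ q, Z q * Z q = 1 := by
    rw [hZdef, sumE]
    rw [show (∑ j, Zfun n m k F p (p.1, j)) = 1 by
      rw [Zrow n m k F p hn hm hmn hF p.1]; simp]
    rw [show (∑ i, Zfun n m k F p (i, p.2)) = 1 by
      rw [Zcol n m k F p hn hm hmn hF p.2]; simp]
    rw [Finset.sum_congr rfl
      (fun t _ => ZT n m k F p hn hm hmn hF horth t (F t p.1 p.2))]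
    rw [← hZdef, hsZ]
    simp only [ite_true, if_pos rfl, Finset.sum_const, Finset.card_univ,
      Fintype.card_fin, nsmul_eq_mul, mul_one]
    simpa using hgamma
  have hB : ∑ q : Fin n × Fin n, ((if q = p then (1:ℚ) else 0) - Z q)^2 = 0 := by
    have expand : ∀ q : Fin n × Fin n, ((if q = p then (1:ℚ) else 0) - Z q)^2 =
        (if q = p then (1:ℚ) else 0) - 2 * (if q = p then Z q else 0) + Z q * Z q := by
      intro q; by_cases hq : q = p <;> simp [hq] <;> ring
    rw [Finset.sum_congr rfl (fun q _ => expand q)]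
    rw [Finset.sum_add_distrib, Finset.sum_sub_distrib, hZZ]
    rw [Finset.sum_ite_eq' Finset.univ p, ← Finset.mul_sum,
      Finset.sum_ite_eq' Finset.univ p]
    simp [hZp]
    norm_num
  have hZe : ∀ q : Fin n × Fin n, Z q = if q = p then (1:ℚ) else 0 := by
    intro q
    have h0 := (Finset.sum_eq_zero_iff_of_nonneg
      (fun q _ => sq_nonneg ((if q = p then (1:ℚ) else 0) - Z q))).1 hB q (Finset.mem_univ q)
    have := pow_eq_zero_iff (n := 2) (by norm_num) |>.1 h0
    linarith [sub_eq_zero.1 this]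
  have : Y p = ∑ q, Y q * Z q := by
    rw [Finset.sum_congr rfl (fun q _ => by rw [hZe q])]
    rw [Finset.sum_congr rfl (fun q _ => by
      show Y q * (if q = p then (1:ℚ) else 0) = if q = p then Y q else 0
      by_cases hq : q = p <;> simp [hq])]
    rw [Finset.sum_ite_eq' Finset.univ p]
    simp
  rw [this, hYZ]

/-- The block index of a cell of the dilated square. -/
def bl {n : ℕ} (d : ℕ) (hd : 0 < d) (x : Fin (d * n)) : Fin n :=
  ⟨x.1 / d, (Nat.div_lt_iff_lt_mul hd).2 (Nat.lt_of_lt_of_eq x.2 (Nat.mul_comm d n))⟩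

lemma dilate_eq {n m : ℕ} (d : ℕ) (hd : 0 < d) (F : Fin n → Fin n → Fin m)
    (x y : Fin (d * n)) : dilate d hd F x y = F (bl d hd x) (bl d hd y) := rfl

lemma blcard {n : ℕ} (d : ℕ) (hd : 0 < d) (i : Fin n) :
    (Finset.univ.filter fun x : Fin (d * n) => bl d hd x = i).card = d := by
  refine Eq.trans ?_ (by simp : (Finset.univ : Finset (Fin d)).card = d)
  refine Finset.card_bij' (fun x _ => (⟨x.1 % d, Nat.mod_lt _ hd⟩ : Fin d))
    (fun u _ => (⟨d * i.1 + u.1, by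
      calc d * i.1 + u.1 < d * i.1 + d := by omega
        _ = d * (i.1 + 1) := by ring
        _ ≤ d * n := Nat.mul_le_mul_left d i.isLt⟩ : Fin (d * n)))
    (fun x hx => Finset.mem_univ _) ?_ ?_ ?_
  · intro u _
    simp only [Finset.mem_filter, Finset.mem_univ, true_and]
    apply Fin.ext
    show (d * i.1 + u.1) / d = i.1
    rw [Nat.mul_add_div hd, Nat.div_eq_of_lt u.isLt]
    omega
  · intro x hx
    simp only [Finset.mem_filter, Finset.mem_univ, true_and] at hx
    have hval : x.1 / d = i.1 := congrArg Fin.val hx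
    apply Fin.ext
    show d * i.1 + x.1 % d = x.1
    rw [← hval, Nat.div_add_mod]
  · intro u _
    apply Fin.ext
    show (d * i.1 + u.1) % d = u.1
    rw [Nat.mul_add_mod, Nat.mod_eq_of_lt u.isLt]

lemma blQ {n : ℕ} (d : ℕ) (hd : 0 < d) (i : Fin n) :
    ∑ x : Fin (d * n), (if bl d hd x = i then (1 : ℚ) else 0) = d := by
  rw [Finset.sum_boole, blcard]

theorem stmt3 (n m k d : ℕ) (hn : 0 < n) (hm : 2 ≤ m) (hmn : m ∣ n) (hd : 0 < d)
    (F : Fin k → Fin n → Fin n → Fin m)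
    (hF : ∀ t, IsFreqSquare (n / m) (F t))
    (horth : ∀ s t, s ≠ t → AreOrth (n / m) (F s) (F t))
    (hcomplete : k * (m - 1) = (n - 1) ^ 2)
    (hd2 : ¬ m ∣ d ^ 2) :
    IsMaxFamily (d * n / m) (fun t => dilate d hd (F t)) := by
  rintro ⟨G, hG, hGorth⟩
  have hm0 : 0 < m := by omega
  have hL : 0 < n / m := Nat.div_pos (Nat.le_of_dvd hn hmn) hm0
  have hL'q : ((d * n / m : ℕ) : ℚ) = (d : ℚ) * ((n / m : ℕ) : ℚ) := by
    rw [Nat.mul_div_assoc d hmn]; push_cast; ring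
  have hmLq : (n : ℚ) = (m : ℚ) * ((n / m : ℕ) : ℚ) := by
    rw [← Nat.cast_mul, Nat.mul_div_cancel' hmn]
  set b : Fin m := ⟨0, hm0⟩ with hbdef
  set S : Fin n × Fin n → ℚ := fun p => ∑ x : Fin (d * n), ∑ y : Fin (d * n),
    if bl d hd x = p.1 then
      (if bl d hd y = p.2 then (if G x y = b then (1 : ℚ) else 0) else 0) else 0 with hSdef
  have hrowG : ∀ x : Fin (d * n),
      ∑ y : Fin (d * n), (if G x y = b then (1 : ℚ) else 0) = ((d * n / m : ℕ) : ℚ) :=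
    fun x => by rw [Finset.sum_boole, hG.1 x b]
  have hcolG : ∀ y : Fin (d * n),
      ∑ x : Fin (d * n), (if G x y = b then (1 : ℚ) else 0) = ((d * n / m : ℕ) : ℚ) :=
    fun y => by rw [Finset.sum_boole, hG.2 y b]
  have hSrow : ∀ i, ∑ j, S (i, j) = ((d * n / m : ℕ) : ℚ) * d := by
    intro i
    rw [hSdef]
    simp only []
    rw [Finset.sum_comm]
    rw [Finset.sum_congr rfl (fun x _ => Finset.sum_comm)]
    have inner : ∀ x y : Fin (d * n),
        (∑ j : Fin n, if bl d hd x = i then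
          (if bl d hd y = j then (if G x y = b then (1:ℚ) else 0) else 0) else 0)
        = if bl d hd x = i then (if G x y = b then (1:ℚ) else 0) else 0 := by
      intro x y
      by_cases h1 : bl d hd x = i
      · simp only [h1, ite_true, Finset.sum_ite_eq, Finset.mem_univ]
      · simp [h1]
    rw [Finset.sum_congr rfl (fun x _ => Finset.sum_congr rfl (fun y _ => inner x y))]
    have inner2 : ∀ x : Fin (d * n),
        (∑ y : Fin (d * n), if bl d hd x = i then (if G x y = b then (1:ℚ) else 0) else 0)
        = ((d * n / m : ℕ) : ℚ) * (if bl d hd x = i then (1:ℚ) else 0) := by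
      intro x
      by_cases h1 : bl d hd x = i
      · simp only [h1, ite_true, hrowG x, mul_one]
      · simp [h1]
    rw [Finset.sum_congr rfl (fun x _ => inner2 x), ← Finset.mul_sum, blQ]
  have hScol : ∀ j, ∑ i, S (i, j) = ((d * n / m : ℕ) : ℚ) * d := by
    intro j
    rw [hSdef]
    simp only []
    rw [Finset.sum_comm]
    rw [Finset.sum_congr rfl (fun x _ => Finset.sum_comm)]
    have inner : ∀ x y : Fin (d * n),
        (∑ i : Fin n, if bl d hd x = i then
          (if bl d hd y = j then (if G x y = b then (1:ℚ) else 0) else 0) else 0)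
        = if bl d hd y = j then (if G x y = b then (1:ℚ) else 0) else 0 := by
      intro x y
      simp only [Finset.sum_ite_eq, Finset.mem_univ, ite_true]
    rw [Finset.sum_congr rfl (fun x _ => Finset.sum_congr rfl (fun y _ => inner x y))]
    rw [Finset.sum_comm]
    have inner2 : ∀ y : Fin (d * n),
        (∑ x : Fin (d * n), if bl d hd y = j then (if G x y = b then (1:ℚ) else 0) else 0)
        = ((d * n / m : ℕ) : ℚ) * (if bl d hd y = j then (1:ℚ) else 0) := by
      intro y
      by_cases h1 : bl d hd y = j
      · simp only [h1, ite_true, hcolG y, mul_one]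
      · simp [h1]
    rw [Finset.sum_congr rfl (fun y _ => inner2 y), ← Finset.mul_sum, blQ]
  have hST : ∀ t a, (∑ p : Fin n × Fin n, if F t p.1 p.2 = a then S p else 0)
      = ((d * n / m : ℕ) : ℚ) ^ 2 := by
    intro t a
    have point : ∀ p : Fin n × Fin n, (if F t p.1 p.2 = a then S p else 0)
        = ∑ x : Fin (d * n), ∑ y : Fin (d * n),
          (if bl d hd x = p.1 then (if bl d hd y = p.2 then
            (if F t p.1 p.2 = a then (if G x y = b then (1:ℚ) else 0) else 0) else 0) else 0) := by
      intro p
      by_cases h1 : F t p.1 p.2 = a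
      · simp only [h1, ite_true, hSdef]
      · simp only [h1, ite_false]
        symm
        apply Finset.sum_eq_zero; intro x _
        apply Finset.sum_eq_zero; intro y _
        simp [h1]
    rw [Finset.sum_congr rfl (fun p _ => point p)]
    rw [Finset.sum_comm]
    rw [Finset.sum_congr rfl (fun x _ => Finset.sum_comm)]
    -- now : ∑ x ∑ y ∑ p
    have inner : ∀ x y : Fin (d * n),
        (∑ p : Fin n × Fin n, if bl d hd x = p.1 then (if bl d hd y = p.2 then
            (if F t p.1 p.2 = a then (if G x y = b then (1:ℚ) else 0) else 0) else 0) else 0)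
        = if F t (bl d hd x) (bl d hd y) = a then (if G x y = b then (1:ℚ) else 0) else 0 := by
      intro x y
      rw [Fintype.sum_prod_type]
      dsimp only
      have h1 : ∀ x1 : Fin n, (∑ y1 : Fin n, if bl d hd x = x1 then
          (if bl d hd y = y1 then (if F t x1 y1 = a then
            (if G x y = b then (1:ℚ) else 0) else 0) else 0) else 0)
          = if bl d hd x = x1 then (if F t x1 (bl d hd y) = a then
            (if G x y = b then (1:ℚ) else 0) else 0) else 0 := by
        intro x1
        by_cases hx : bl d hd x = x1
        · simp only [hx, ite_true, Finset.sum_ite_eq, Finset.mem_univ]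
        · simp [hx]
      rw [Finset.sum_congr rfl (fun x1 _ => h1 x1), Finset.sum_ite_eq]
      simp only [Finset.mem_univ, ite_true]
    rw [Finset.sum_congr rfl (fun x _ => Finset.sum_congr rfl (fun y _ => inner x y))]
    have tocard : (∑ x : Fin (d * n), ∑ y : Fin (d * n),
        if F t (bl d hd x) (bl d hd y) = a then (if G x y = b then (1:ℚ) else 0) else 0)
        = ∑ q : Fin (d * n) × Fin (d * n),
          (if dilate d hd (F t) q.1 q.2 = a ∧ G q.1 q.2 = b then (1:ℚ) else 0) := by
      rw [Fintype.sum_prod_type]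
      refine Finset.sum_congr rfl fun x _ => Finset.sum_congr rfl fun y _ => ?_
      rw [dilate_eq]
      by_cases h1 : F t (bl d hd x) (bl d hd y) = a <;>
        by_cases h2 : G x y = b <;> simp [h1, h2]
    rw [tocard, Finset.sum_boole, hGorth t a b]
    push_cast
    ring
  -- apply the core lemma
  have hY : ∀ p : Fin n × Fin n, (m : ℚ) * S p - (d : ℚ) ^ 2 = 0 := by
    apply core n m k hn hm0 hmn F hF horth hcomplete
    · intro i
      rw [Finset.sum_sub_distrib, ← Finset.mul_sum, hSrow]
      simp only [Finset.sum_const, Finset.card_univ, Fintype.card_fin, nsmul_eq_mul]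
      rw [hL'q, hmLq]
      ring
    · intro j
      rw [Finset.sum_sub_distrib, ← Finset.mul_sum, hScol]
      simp only [Finset.sum_const, Finset.card_univ, Fintype.card_fin, nsmul_eq_mul]
      rw [hL'q, hmLq]
      ring
    · intro t a
      have point : ∀ q : Fin n × Fin n,
          (if F t q.1 q.2 = a then (m : ℚ) * S q - (d : ℚ) ^ 2 else 0)
          = (m : ℚ) * (if F t q.1 q.2 = a then S q else 0)
            - (d : ℚ)^2 * (if F t q.1 q.2 = a then (1:ℚ) else 0) := by
        intro q
        by_cases h1 : F t q.1 q.2 = a <;> simp [h1]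
      rw [Finset.sum_congr rfl (fun q _ => point q)]
      rw [Finset.sum_sub_distrib, ← Finset.mul_sum, ← Finset.mul_sum, hST t a,
        classcountQ (hF t).1 a]
      rw [hL'q, hmLq]
      ring
  -- extract divisibility
  have p0 : Fin n × Fin n := (⟨0, hn⟩, ⟨0, hn⟩)
  have hSnat : ∀ p : Fin n × Fin n, S p = ((Finset.univ.filter
      fun q : Fin (d * n) × Fin (d * n) =>
        bl d hd q.1 = p.1 ∧ bl d hd q.2 = p.2 ∧ G q.1 q.2 = b).card : ℚ) := by
    intro p
    rw [← Finset.sum_boole, Fintype.sum_prod_type, hSdef]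
    refine Finset.sum_congr rfl fun x _ => Finset.sum_congr rfl fun y _ => ?_
    by_cases h1 : bl d hd x = p.1 <;> by_cases h2 : bl d hd y = p.2 <;>
      by_cases h3 : G x y = b <;> simp [h1, h2, h3]
  have hfin : (m : ℚ) * ((Finset.univ.filter
      fun q : Fin (d * n) × Fin (d * n) =>
        bl d hd q.1 = p0.1 ∧ bl d hd q.2 = p0.2 ∧ G q.1 q.2 = b).card : ℚ) = (d : ℚ) ^ 2 := by
    have := hY p0
    rw [hSnat p0] at this
    linarith
  apply hd2
  refine ⟨(Finset.univ.filter fun q : Fin (d * n) × Fin (d * n) =>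
      bl d hd q.1 = p0.1 ∧ bl d hd q.2 = p0.2 ∧ G q.1 q.2 = b).card, ?_⟩
  exact_mod_cast hfin.symm
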